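/- Let k ≥ 2, λ = 1/(120k²), and n ≥ 16(2k−1)/λ². Let G* be an n-vertex graph containing no k independent cycles whose spectral radius ρ = ρ(G*) is maximum among all n-vertex graphs containing no k independent cycles, let x be a unit eigenvector of the adjacency matrix of G* for the eigenvalue ρ with all entries nonnegative, and let u* be a vertex with x_{u*} = max_u x_u. Let R' = {v ∈ V(G*) : x_v > 4λ x_{u*}}. Then for each vertex v ∈ R', e(N(v) \ R', R' \ {v}) ≤ (2k−2)d(v) + (2k−1)|R'|. -/

import Mathlib

open Finset Matrix

/-- `G` contains `k` pairwise vertex-disjoint cycles. -/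
def HasNDisjointCycles {V : Type*} (G : SimpleGraph V) (k : ℕ) : Prop :=
  ∃ (v : Fin k → V) (w : ∀ i : Fin k, G.Walk (v i) (v i)),
    (∀ i, (w i).IsCycle) ∧
    ∀ i j : Fin k, i ≠ j → ∀ y, y ∈ (w i).support → y ∉ (w j).support

/-- The complete split graph on `n` vertices: the join of a clique on the first `r`
vertices with an independent set on the remaining `n - r` vertices. -/
def completeSplitGraph (n r : ℕ) : SimpleGraph (Fin n) where
  Adj u v := u ≠ v ∧ ((u : ℕ) < r ∨ (v : ℕ) < r)
  symm := ⟨fun u v h => ⟨h.1.symm, h.2.symm⟩⟩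
  loopless := ⟨fun u h => h.1 rfl⟩

instance (n r : ℕ) : DecidableRel (completeSplitGraph n r).Adj :=
  fun u v => inferInstanceAs (Decidable (u ≠ v ∧ ((u : ℕ) < r ∨ (v : ℕ) < r)))

/-- The spectral radius of a finite simple graph: the largest eigenvalue of its
adjacency matrix, i.e. the supremum of its (real) eigenvalues. -/
noncomputable def graphSpectralRadius {V : Type*} [Fintype V] (G : SimpleGraph V)
    [DecidableRel G.Adj] : ℝ :=
  sSup {μ : ℝ | ∃ f : V → ℝ, f ≠ 0 ∧ G.adjMatrix ℝ *ᵥ f = μ • f}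

/-- `eAB G A B` is the number of ordered pairs `(u, w) ∈ A × B` with `uw` an edge of `G`. -/
noncomputable def eAB {V : Type*} (G : SimpleGraph V) (A B : Set V) : ℕ :=
  {p : V × V | p.1 ∈ A ∧ p.2 ∈ B ∧ G.Adj p.1 p.2}.ncard

/-- `eIn G S` is the number of edges of `G` with both endpoints in `S`. -/
noncomputable def eIn {V : Type*} (G : SimpleGraph V) (S : Set V) : ℕ :=
  {e : Sym2 V | e ∈ G.edgeSet ∧ ∀ v ∈ e, v ∈ S}.ncard

set_option linter.unusedSectionVars false
set_option maxHeartbeats 1600000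

variable {V : Type*} [Fintype V] [DecidableEq V]

/-- A cyclic sequence of `m ≥ 3` distinct vertices, consecutive ones adjacent. -/
def IsZC (H : SimpleGraph V) (m : ℕ) (c : ℕ → V) : Prop :=
  3 ≤ m ∧ (∀ i, i < m → ∀ j, j < m → c i = c j → i = j) ∧
    ∀ i, i < m → H.Adj (c i) (c ((i + 1) % m))

def zsupp (m : ℕ) (c : ℕ → V) : Finset V := (Finset.range m).image c

lemma mem_zsupp {m : ℕ} {c : ℕ → V} {y : V} : y ∈ zsupp m c ↔ ∃ i, i < m ∧ c i = y := by
  simp [zsupp]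

lemma IsZC.mono {H H' : SimpleGraph V} (h : ∀ u w, H.Adj u w → H'.Adj u w)
    {m : ℕ} {c : ℕ → V} (hz : IsZC H m c) : IsZC H' m c :=
  ⟨hz.1, hz.2.1, fun i hi => h _ _ (hz.2.2 i hi)⟩

lemma IsZC.rotate {H : SimpleGraph V} {m : ℕ} {c : ℕ → V} (hz : IsZC H m c)
    {t : ℕ} (ht : t < m) :
    IsZC H m (fun i => c ((i + t) % m)) ∧ zsupp m (fun i => c ((i + t) % m)) = zsupp m c := by
  obtain ⟨hm, hinj, hadj⟩ := hz
  have hm0 : 0 < m := by omega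
  constructor
  · refine ⟨hm, ?_, ?_⟩
    · intro i hi j hj hc
      have h1 : (i + t) % m = (j + t) % m :=
        hinj _ (Nat.mod_lt _ hm0) _ (Nat.mod_lt _ hm0) hc
      have h2 : (i : ℕ) ≡ j [MOD m] := by
        have := (Nat.ModEq.add_right_cancel' t (h1 : (i+t) ≡ (j+t) [MOD m]))
        exact this
      have := h2
      unfold Nat.ModEq at this
      rw [Nat.mod_eq_of_lt hi, Nat.mod_eq_of_lt hj] at this
      exact this
    · intro i hi
      have key : ((i + 1) % m + t) % m = ((i + t) % m + 1) % m := by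
        rw [Nat.mod_add_mod, Nat.mod_add_mod]
        congr 1
        omega
      show H.Adj (c ((i + t) % m)) (c (((i + 1) % m + t) % m))
      rw [key]
      exact hadj _ (Nat.mod_lt _ hm0)
  · apply Finset.ext
    intro y
    simp only [mem_zsupp]
    constructor
    · rintro ⟨i, hi, rfl⟩
      exact ⟨(i + t) % m, Nat.mod_lt _ hm0, rfl⟩
    · rintro ⟨j, hj, rfl⟩
      refine ⟨(j + m - t) % m, Nat.mod_lt _ hm0, ?_⟩
      have : ((j + m - t) % m + t) % m = j := by
        rw [Nat.mod_add_mod]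
        have : j + m - t + t = j + m := by omega
        rw [this, Nat.add_mod_right, Nat.mod_eq_of_lt hj]
      rw [this]

lemma walk_seg (G : SimpleGraph V) (m : ℕ) (c : ℕ → V) (hm : 3 ≤ m)
    (hadj : ∀ i, i < m → G.Adj (c i) (c ((i + 1) % m))) :
    ∀ d : ℕ, d < m - 1 → ∃ w : G.Walk (c (m - 1 - d)) (c 0),
      w.support = ((List.range (d + 1)).map fun s => c (m - 1 - d + s)) ++ [c 0] ∧
      (∀ e ∈ w.edges,
        (∃ i, m - 1 - d ≤ i ∧ i + 1 ≤ m - 1 ∧ e = s(c i, c (i + 1))) ∨ e = s(c (m - 1), c 0)) := by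
  intro d
  induction d with
  | zero =>
    intro _
    have h1 : G.Adj (c (m - 1)) (c 0) := by
      have := hadj (m - 1) (by omega)
      have e1 : (m - 1 + 1) % m = 0 := by
        have : m - 1 + 1 = m := by omega
        rw [this, Nat.mod_self]
      rwa [e1] at this
    refine ⟨SimpleGraph.Walk.cons h1 SimpleGraph.Walk.nil, ?_, ?_⟩
    · simp [List.range_succ]
    · intro e he
      simp only [SimpleGraph.Walk.edges_cons, SimpleGraph.Walk.edges_nil, List.mem_singleton] at he
      exact Or.inr he
  | succ d ih =>
    intro hd
    obtain ⟨w', hsup, hedge⟩ := ih (by omega)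
    have hj1 : m - 1 - (d + 1) + 1 = m - 1 - d := by omega
    have h1 : G.Adj (c (m - 1 - (d + 1))) (c (m - 1 - d)) := by
      have := hadj (m - 1 - (d + 1)) (by omega)
      have e1 : (m - 1 - (d + 1) + 1) % m = m - 1 - d := by
        rw [hj1]; exact Nat.mod_eq_of_lt (by omega)
      rwa [e1] at this
    refine ⟨SimpleGraph.Walk.cons h1 w', ?_, ?_⟩
    · rw [SimpleGraph.Walk.support_cons, hsup]
      have hr : List.range (d + 1 + 1) = 0 :: (List.range (d + 1)).map Nat.succ :=
        List.range_succ_eq_map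
      rw [hr, List.map_cons, List.map_map]
      have hfun : ((fun s => c (m - 1 - (d + 1) + s)) ∘ Nat.succ) =
          fun s => c (m - 1 - d + s) := by
        funext s
        simp only [Function.comp_apply]
        congr 1
        omega
      rw [hfun]
      simp
    · intro e he
      rw [SimpleGraph.Walk.edges_cons] at he
      rcases List.mem_cons.mp he with rfl | he'
      · left
        refine ⟨m - 1 - (d + 1), le_refl _, by omega, ?_⟩
        rw [hj1]
      · rcases hedge e he' with ⟨i, hi1, hi2, hi3⟩ | h
        · exact Or.inl ⟨i, by omega, hi2, hi3⟩
        · exact Or.inr h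

lemma IsZC.toWalk {G : SimpleGraph V} {m : ℕ} {c : ℕ → V} (h : IsZC G m c) :
    ∃ w : G.Walk (c 0) (c 0), w.IsCycle ∧ ∀ y, y ∈ w.support ↔ y ∈ zsupp m c := by
  obtain ⟨hm, hinj, hadj⟩ := h
  obtain ⟨w0, hsup0, hedge⟩ := walk_seg G m c hm hadj (m - 2) (by omega)
  have e1 : m - 1 - (m - 2) = 1 := by omega
  have h01 : G.Adj (c 0) (c 1) := by
    have := hadj 0 (by omega)
    rwa [Nat.mod_eq_of_lt (by omega : (0:ℕ) + 1 < m)] at this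
  set w' : G.Walk (c 1) (c 0) := w0.copy (congrArg c e1) rfl with hw'
  have hsup : w'.support = ((List.range (m - 1)).map fun s => c (1 + s)) ++ [c 0] := by
    rw [hw', SimpleGraph.Walk.support_copy, hsup0]
    have hf : (fun s => c (m - 1 - (m - 2) + s)) = fun s => c (1 + s) := by
      funext s; congr 1; omega
    rw [hf, show m - 2 + 1 = m - 1 from by omega]
  have hedge' : ∀ e ∈ w'.edges,
      (∃ i, 1 ≤ i ∧ i + 1 ≤ m - 1 ∧ e = s(c i, c (i + 1))) ∨ e = s(c (m - 1), c 0) := by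
    intro e he
    rw [hw', SimpleGraph.Walk.edges_copy] at he
    rcases hedge e he with ⟨i, hi1, hi2, hi3⟩ | h
    · exact Or.inl ⟨i, by omega, hi2, hi3⟩
    · exact Or.inr h
  clear hedge hsup0
  refine ⟨SimpleGraph.Walk.cons h01 w', ?_, ?_⟩
  · rw [SimpleGraph.Walk.cons_isCycle_iff]
    constructor
    · rw [SimpleGraph.Walk.isPath_def, hsup]
      rw [List.nodup_append]
      refine ⟨?_, List.nodup_singleton _, ?_⟩
      · apply List.Nodup.map_on
        · intro a ha b hb hab
          rw [List.mem_range] at ha hb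
          have := hinj (1 + a) (by omega) (1 + b) (by omega) hab
          omega
        · exact List.nodup_range
      · intro y hy
        simp only [List.mem_map, List.mem_range] at hy
        obtain ⟨s, hs, rfl⟩ := hy
        simp only [List.mem_singleton]
        intro b hb hc
        rw [hb] at hc
        have := hinj (1 + s) (by omega) 0 (by omega) hc
        omega
    · intro hcon
      rcases hedge' _ hcon with ⟨i, hi1, hi2, hi3⟩ | hh
      · rw [Sym2.eq_iff] at hi3
        rcases hi3 with ⟨ha, hb⟩ | ⟨ha, hb⟩
        · have := hinj 0 (by omega) i (by omega) ha
          omega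
        · have := hinj 0 (by omega) (i + 1) (by omega) ha
          omega
      · rw [Sym2.eq_iff] at hh
        rcases hh with ⟨ha, hb⟩ | ⟨ha, hb⟩
        · have := hinj 1 (by omega) 0 (by omega) hb
          omega
        · have := hinj 1 (by omega) (m - 1) (by omega) hb
          omega
  · intro y
    rw [SimpleGraph.Walk.support_cons, List.mem_cons, hsup, mem_zsupp]
    simp only [List.mem_append, List.mem_map, List.mem_range, List.mem_singleton]
    constructor
    · rintro (rfl | ⟨⟨s, hs, rfl⟩ | rfl⟩)
      · exact ⟨0, by omega, rfl⟩
      · exact ⟨1 + s, by omega, rfl⟩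
      · exact ⟨0, by omega, rfl⟩
    · rintro ⟨i, hi, rfl⟩
      rcases Nat.eq_zero_or_pos i with rfl | hpos
      · exact Or.inl rfl
      · exact Or.inr (Or.inl ⟨i - 1, by omega, by congr 1; omega⟩)

lemma exists_zc (H : SimpleGraph V) [DecidableRel H.Adj] (x0 y0 : V) (h0 : H.Adj x0 y0)
    (hdeg : ∀ z w, H.Adj z w → 2 ≤ H.degree z) : ∃ m c, IsZC H m c := by
  classical
  set P : ℕ → Prop := fun m => ∃ c : ℕ → V,
    (∀ i, i < m → ∀ j, j < m → c i = c j → i = j) ∧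
    (∀ i, i + 1 < m → H.Adj (c i) (c (i + 1))) ∧ 2 ≤ m with hP
  have hbound : ∀ m, P m → m ≤ Fintype.card V := by
    rintro m ⟨c, hinj, -, -⟩
    have : (Finset.range m).card ≤ (Finset.univ : Finset V).card := by
      apply Finset.card_le_card_of_injOn c (fun _ _ => Finset.mem_univ _)
      intro i hi j hj hij
      exact hinj i (Finset.mem_range.mp hi) j (Finset.mem_range.mp hj) hij
    simpa using this
  have hP2 : P 2 := by
    refine ⟨fun i => if i = 0 then x0 else y0, ?_, ?_, le_refl _⟩
    · intro i hi j hj hij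
      have hne := h0.ne
      interval_cases i <;> interval_cases j <;> simp_all
    · intro i hi
      have : i = 0 := by omega
      subst this
      simpa using h0
  set M := Nat.findGreatest P (Fintype.card V) with hM
  have hM2 : 2 ≤ M := Nat.le_findGreatest (hbound 2 hP2) hP2
  have hPM : P M := Nat.findGreatest_of_ne_zero rfl (by omega)
  have hnot : ¬ P (M + 1) := fun hp =>
    Nat.findGreatest_is_greatest (Nat.lt_succ_self M) (hbound _ hp) hp
  obtain ⟨c, hinj, hchain, -⟩ := hPM
  -- all neighbors of the endpoint c (M-1) lie on the path
  have hallnb : ∀ w, H.Adj (c (M - 1)) w → ∃ i, i < M ∧ c i = w := by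
    intro w hw
    by_contra hcon
    push_neg at hcon
    apply hnot
    refine ⟨fun i => if i = M then w else c i, ?_, ?_, by omega⟩
    · intro i hi j hj hij
      by_cases hiM : i = M <;> by_cases hjM : j = M
      · omega
      · simp only [hiM, if_pos rfl, if_neg hjM] at hij
        exact absurd hij.symm (hcon j (by omega))
      · simp only [hjM, if_pos rfl, if_neg hiM] at hij
        exact absurd hij (hcon i (by omega))
      · simp only [if_neg hiM, if_neg hjM] at hij
        exact hinj i (by omega) j (by omega) hij
    · intro i hi
      by_cases hiM : i + 1 = M
      · have hi0 : i ≠ M := by omega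
        simp only [if_neg hi0, hiM, if_pos rfl]
        have : i = M - 1 := by omega
        subst this
        exact hw
      · have hi0 : i ≠ M := by omega
        simp only [if_neg hi0, if_neg hiM]
        exact hchain i (by omega)
  have hx : H.Adj (c (M - 1)) (c (M - 2)) := by
    have := hchain (M - 2) (by omega)
    have e : M - 2 + 1 = M - 1 := by omega
    rw [e] at this
    exact this.symm
  have hdegx : 2 ≤ (H.neighborFinset (c (M - 1))).card := by
    rw [SimpleGraph.card_neighborFinset_eq_degree]
    exact hdeg _ _ hx
  have hsub : H.neighborFinset (c (M - 1)) ⊆ (Finset.range (M - 1)).image c := by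
    intro w hw
    rw [SimpleGraph.mem_neighborFinset] at hw
    obtain ⟨i, hi, rfl⟩ := hallnb w hw
    have : i ≠ M - 1 := by
      intro h; subst h; exact H.loopless.irrefl _ hw
    exact Finset.mem_image.mpr ⟨i, Finset.mem_range.mpr (by omega), rfl⟩
  have hnotsub : ¬ (H.neighborFinset (c (M - 1)) ⊆ {c (M - 2)}) := by
    intro h
    have := Finset.card_le_card h
    rw [Finset.card_singleton] at this
    omega
  obtain ⟨w, hwmem, hwne⟩ := Finset.not_subset.mp hnotsub
  rw [SimpleGraph.mem_neighborFinset] at hwmem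
  obtain ⟨i, hiM, rfl⟩ := hallnb w hwmem
  have hine1 : i ≠ M - 1 := fun h => by subst h; exact H.loopless.irrefl _ hwmem
  have hine2 : i ≠ M - 2 := fun h => by subst h; exact hwne (Finset.mem_singleton_self _)
  have hi3 : i + 3 ≤ M := by omega
  refine ⟨M - i, fun s => c (i + s), by omega, ?_, ?_⟩
  · intro s hs t ht hst
    have := hinj (i + s) (by omega) (i + t) (by omega) hst
    omega
  · intro s hs
    by_cases hlast : s + 1 = M - i
    · rw [hlast, Nat.mod_self]
      show H.Adj (c (i + s)) (c (i + 0))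
      have e : i + s = M - 1 := by omega
      rw [e]
      exact hwmem
    · rw [Nat.mod_eq_of_lt (by omega)]
      show H.Adj (c (i + s)) (c (i + (s + 1)))
      have := hchain (i + s) (by omega)
      have e : i + s + 1 = i + (s + 1) := by omega
      rwa [e] at this

section Surgery

variable {H : SimpleGraph V} {m : ℕ} {c : ℕ → V}

lemma rot_val {t : ℕ} (i : ℕ) (h : i + t < m) : (fun i => c ((i + t) % m)) i = c (i + t) := by
  simp only []
  rw [Nat.mod_eq_of_lt h]

lemma surgA (hzc : IsZC H m c) (hmin : ∀ m' c', IsZC H m' c' → m ≤ m')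
    (t s : ℕ) (hs : s < m) (hts : t < s) (h2 : 2 ≤ s - t) (h3 : s - t ≤ m - 2)
    (hadj : H.Adj (c t) (c s)) : False := by
  obtain ⟨hm, hinj, hadjc⟩ := hzc
  obtain ⟨⟨hm2, hinj2, hadj2⟩, hsupp2⟩ := IsZC.rotate ⟨hm, hinj, hadjc⟩ (show t < m by omega)
  set c₂ : ℕ → V := fun i => c ((i + t) % m) with hc₂
  have hv : ∀ i, i + t < m → c₂ i = c (i + t) := fun i h => by
    rw [hc₂]; simp only []; rw [Nat.mod_eq_of_lt h]
  have hcyc : IsZC H (s - t + 1) c₂ := by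
    refine ⟨by omega, ?_, ?_⟩
    · intro i hi j hj hij
      exact hinj2 i (by omega) j (by omega) hij
    · intro i hi
      by_cases hlast : i + 1 = s - t + 1
      · rw [hlast, Nat.mod_self]
        have e1 : c₂ i = c s := by rw [hv i (by omega)]; congr 1; omega
        have e2 : c₂ 0 = c t := by rw [hv 0 (by omega)]; congr 1; omega
        rw [e1, e2]
        exact hadj.symm
      · rw [Nat.mod_eq_of_lt (by omega)]
        have := hadj2 i (by omega)
        rwa [Nat.mod_eq_of_lt (show i + 1 < m by omega)] at this
  have := hmin _ _ hcyc
  omega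

lemma surgB (hzc : IsZC H m c) (hmin : ∀ m' c', IsZC H m' c' → m ≤ m')
    {u : V} (hu : u ∉ zsupp m c) (p q : ℕ) (hq : q < m) (hpq : p < q)
    (h3 : q - p ≤ m - 3) (ha1 : H.Adj u (c p)) (ha2 : H.Adj u (c q)) : False := by
  obtain ⟨hm, hinj, hadjc⟩ := hzc
  obtain ⟨⟨hm2, hinj2, hadj2⟩, hsupp2⟩ := IsZC.rotate ⟨hm, hinj, hadjc⟩ (show p < m by omega)
  set c₂ : ℕ → V := fun i => c ((i + p) % m) with hc₂
  have hv : ∀ i, i + p < m → c₂ i = c (i + p) := fun i h => by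
    rw [hc₂]; simp only []; rw [Nat.mod_eq_of_lt h]
  have hu2 : u ∉ zsupp m c₂ := by rw [hsupp2]; exact hu
  set g := q - p with hg
  set c' : ℕ → V := fun i => if i ≤ g then c₂ i else u with hc'
  have hcyc : IsZC H (g + 2) c' := by
    refine ⟨by omega, ?_, ?_⟩
    · intro i hi j hj hij
      rw [hc'] at hij
      simp only [] at hij
      by_cases hig : i ≤ g <;> by_cases hjg : j ≤ g
      · rw [if_pos hig, if_pos hjg] at hij
        exact hinj2 i (by omega) j (by omega) hij
      · rw [if_pos hig, if_neg hjg] at hij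
        exact absurd (mem_zsupp.mpr ⟨i, by omega, hij⟩) hu2
      · rw [if_neg hig, if_pos hjg] at hij
        exact absurd (mem_zsupp.mpr ⟨j, by omega, hij.symm⟩) hu2
      · omega
    · intro i hi
      have hgp : c₂ g = c q := by rw [hv g (by omega)]; congr 1; omega
      have h0p : c₂ 0 = c p := by rw [hv 0 (by omega)]; congr 1; omega
      by_cases hlast : i + 1 = g + 2
      · rw [hlast, Nat.mod_self]
        have e1 : c' i = u := by rw [hc']; simp only []; rw [if_neg (by omega)]
        have e2 : c' 0 = c p := by rw [hc']; simp only []; rw [if_pos (by omega)]; exact h0p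
        rw [e1, e2]
        exact ha1
      · rw [Nat.mod_eq_of_lt (by omega)]
        by_cases hig : i + 1 ≤ g
        · have e1 : c' i = c₂ i := by rw [hc']; simp only []; rw [if_pos (by omega)]
          have e2 : c' (i + 1) = c₂ (i + 1) := by rw [hc']; simp only []; rw [if_pos hig]
          rw [e1, e2]
          have := hadj2 i (by omega)
          rwa [Nat.mod_eq_of_lt (show i + 1 < m by omega)] at this
        · have hieq : i = g := by omega
          have e1 : c' i = c q := by
            rw [hc']; simp only []; rw [if_pos (by omega : i ≤ g), hieq]; exact hgp
          have e2 : c' (i + 1) = u := by rw [hc']; simp only []; rw [if_neg (by omega)]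
          rw [e1, e2]
          exact ha2.symm
  have := hmin _ _ hcyc
  omega

lemma min_cycle_nbrs [DecidableRel H.Adj]
    (hnotri : ∀ x y z : V, H.Adj x y → H.Adj y z → H.Adj z x → False)
    (hzc : IsZC H m c) (hmin : ∀ m' c', IsZC H m' c' → m ≤ m')
    (u : V) : ((zsupp m c).filter (H.Adj u)).card ≤ 2 := by
  obtain ⟨hm, hinj, hadjc⟩ := hzc
  have hzc' : IsZC H m c := ⟨hm, hinj, hadjc⟩
  have hm4 : 4 ≤ m := by
    rcases Nat.lt_or_ge m 4 with h | h
    · exfalso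
      have hm3 : m = 3 := by omega
      subst hm3
      have h01 := hadjc 0 (by omega)
      have h12 := hadjc 1 (by omega)
      have h20 := hadjc 2 (by omega)
      have e1 : (0 + 1) % 3 = 1 := by norm_num
      have e2 : (1 + 1) % 3 = 2 := by norm_num
      have e3 : (2 + 1) % 3 = 0 := by norm_num
      rw [e1] at h01
      rw [e2] at h12
      rw [e3] at h20
      exact hnotri _ _ _ h01 h12 h20
    · exact h
  by_contra hcon
  push_neg at hcon
  set P : Finset ℕ := (Finset.range m).filter (fun i => H.Adj u (c i)) with hP
  have hcard : 3 ≤ P.card := by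
    have himg : (zsupp m c).filter (H.Adj u) = P.image c := by
      apply Finset.ext
      intro y
      simp only [Finset.mem_filter, Finset.mem_image, hP, Finset.mem_range, mem_zsupp]
      constructor
      · rintro ⟨⟨i, hi, rfl⟩, hadj⟩
        exact ⟨i, ⟨hi, hadj⟩, rfl⟩
      · rintro ⟨i, ⟨hi, hadj⟩, rfl⟩
        exact ⟨⟨i, hi, rfl⟩, hadj⟩
    have hinjP : Set.InjOn c ↑P := by
      intro i hi j hj hij
      rw [Finset.mem_coe, hP, Finset.mem_filter, Finset.mem_range] at hi hj
      exact hinj i hi.1 j hj.1 hij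
    have himgcard : (P.image c).card = P.card := Finset.card_image_of_injOn hinjP
    rw [himg] at hcon
    omega
  have main : ∀ p q r : ℕ, p ∈ P → q ∈ P → r ∈ P → p < q → q < r → False := by
    intro p q r hp hq hr hpq hqr
    simp only [hP, Finset.mem_filter, Finset.mem_range] at hp hq hr
    obtain ⟨hpm, hap⟩ := hp
    obtain ⟨hqm, haq⟩ := hq
    obtain ⟨hrm, har⟩ := hr
    by_cases hu : u ∈ zsupp m c
    · -- u on the cycle : chord surgery
      obtain ⟨t, htm, hct⟩ := mem_zsupp.mp hu
      rw [← hct] at hap haq har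
      have hpt : p ≠ t := fun h => by subst h; exact H.loopless.irrefl _ hap
      have hqt : q ≠ t := fun h => by subst h; exact H.loopless.irrefl _ haq
      have hrt : r ≠ t := fun h => by subst h; exact H.loopless.irrefl _ har
      have pick : ∃ w, H.Adj (c t) (c w) ∧ w < m ∧
          ((2 ≤ w - t ∧ w - t ≤ m - 2) ∨ (2 ≤ t - w ∧ t - w ≤ m - 2)) := by
        by_cases h1 : (2 ≤ p - t ∧ p - t ≤ m - 2) ∨ (2 ≤ t - p ∧ t - p ≤ m - 2)
        · exact ⟨p, hap, hpm, h1⟩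
        by_cases h2 : (2 ≤ q - t ∧ q - t ≤ m - 2) ∨ (2 ≤ t - q ∧ t - q ≤ m - 2)
        · exact ⟨q, haq, hqm, h2⟩
        by_cases h3 : (2 ≤ r - t ∧ r - t ≤ m - 2) ∨ (2 ≤ t - r ∧ t - r ≤ m - 2)
        · exact ⟨r, har, hrm, h3⟩
        exfalso
        omega
      obtain ⟨w, haw, hwm, hgood⟩ := pick
      rcases hgood with ⟨hg1, hg2⟩ | ⟨hg1, hg2⟩
      · exact surgA hzc' hmin t w hwm (by omega) hg1 hg2 haw
      · exact surgA hzc' hmin w t htm (by omega) hg1 hg2 haw.symm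
    · -- u off the cycle : ear surgery
      by_cases h1 : q - p ≤ m - 3
      · exact surgB hzc' hmin hu p q hqm hpq h1 hap haq
      · have h2 : r - q ≤ m - 3 := by omega
        exact surgB hzc' hmin hu q r hrm hqr h2 haq har
  obtain ⟨a, ha, b, hb, d, hd, hab, had, hbd⟩ := (Finset.two_lt_card (s := P)).mp (by omega)
  rcases Nat.lt_trichotomy a b with h1 | h1 | h1
  · rcases Nat.lt_trichotomy b d with h2 | h2 | h2
    · exact main a b d ha hb hd h1 h2
    · omega
    · rcases Nat.lt_trichotomy a d with h3 | h3 | h3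
      · exact main a d b ha hd hb h3 h2
      · omega
      · exact main d a b hd ha hb h3 h1
  · omega
  · rcases Nat.lt_trichotomy a d with h2 | h2 | h2
    · exact main b a d hb ha hd h1 h2
    · omega
    · rcases Nat.lt_trichotomy b d with h3 | h3 | h3
      · exact main b d a hb hd ha h3 h2
      · omega
      · exact main d b a hd hb ha h3 h1

end Surgery

def avoidG (H : SimpleGraph V) (D : Finset V) : SimpleGraph V where
  Adj u w := H.Adj u w ∧ u ∉ D ∧ w ∉ D
  symm := ⟨fun u w ⟨h, hu, hw⟩ => ⟨h.symm, hw, hu⟩⟩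
  loopless := ⟨fun u ⟨h, _, _⟩ => H.loopless.irrefl u h⟩

instance (H : SimpleGraph V) [DecidableRel H.Adj] (D : Finset V) :
    DecidableRel (avoidG H D).Adj :=
  fun u w => inferInstanceAs (Decidable (H.Adj u w ∧ u ∉ D ∧ w ∉ D))

lemma avoidG_adj {H : SimpleGraph V} {D : Finset V} {u w : V} :
    (avoidG H D).Adj u w ↔ H.Adj u w ∧ u ∉ D ∧ w ∉ D := Iff.rfl

lemma stage (H : SimpleGraph V) [DecidableRel H.Adj] (A B : Finset V)
    (hdisj : Disjoint A B)
    (cross : ∀ u w, H.Adj u w → (u ∈ A ∧ w ∈ B) ∨ (u ∈ B ∧ w ∈ A))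
    (hdA : ∀ a ∈ A, 3 ≤ (B.filter (H.Adj a)).card)
    (hdB : ∀ b ∈ B, 4 ≤ (A.filter (H.Adj b)).card)
    (hAne : A.Nonempty) :
    ∃ m c, IsZC H m c ∧ (∀ u : V, ((zsupp m c).filter (H.Adj u)).card ≤ 2) ∧
      (∀ y ∈ zsupp m c, y ∈ A ∨ y ∈ B) ∧ (A \ zsupp m c).Nonempty := by
  classical
  have hd : ∀ w : V, w ∈ A → w ∈ B → False := fun w ha hb =>
    Finset.disjoint_left.mp hdisj ha hb
  have hnotri : ∀ x y z : V, H.Adj x y → H.Adj y z → H.Adj z x → False := by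
    intro x y z hxy hyz hzx
    rcases cross _ _ hxy with ⟨h1, h2⟩ | ⟨h1, h2⟩ <;>
      rcases cross _ _ hyz with ⟨h3, h4⟩ | ⟨h3, h4⟩ <;>
      rcases cross _ _ hzx with ⟨h5, h6⟩ | ⟨h5, h6⟩ <;>
      first
        | exact hd x h1 h5
        | exact hd x h6 h1
        | exact hd x h1 h6
        | exact hd y h2 h3
        | exact hd y h3 h2
        | exact hd z h4 h5
        | exact hd z h5 h4
        | exact hd x h5 h1
  have hdeg : ∀ z w, H.Adj z w → 2 ≤ H.degree z := by
    intro z w hzw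
    rcases cross _ _ hzw with ⟨hz, _⟩ | ⟨hz, _⟩
    · have hsub : B.filter (H.Adj z) ⊆ H.neighborFinset z := by
        intro y hy
        rw [SimpleGraph.mem_neighborFinset]
        exact (Finset.mem_filter.mp hy).2
      have := Finset.card_le_card hsub
      have h3 := hdA z hz
      rw [SimpleGraph.card_neighborFinset_eq_degree] at this
      omega
    · have hsub : A.filter (H.Adj z) ⊆ H.neighborFinset z := by
        intro y hy
        rw [SimpleGraph.mem_neighborFinset]
        exact (Finset.mem_filter.mp hy).2
      have := Finset.card_le_card hsub
      have h4 := hdB z hz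
      rw [SimpleGraph.card_neighborFinset_eq_degree] at this
      omega
  obtain ⟨a0, ha0⟩ := hAne
  have hBne : (B.filter (H.Adj a0)).Nonempty := by
    rw [← Finset.card_pos]
    have := hdA a0 ha0
    omega
  obtain ⟨w0, hw0⟩ := hBne
  have hadj0 : H.Adj a0 w0 := (Finset.mem_filter.mp hw0).2
  have hex : ∃ m, ∃ c : ℕ → V, IsZC H m c := by
    obtain ⟨m, c, h⟩ := exists_zc H a0 w0 hadj0 hdeg
    exact ⟨m, c, h⟩
  set mm := Nat.find hex with hmm
  obtain ⟨c, hc⟩ := Nat.find_spec hex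
  have hmin : ∀ m' c', IsZC H m' c' → mm ≤ m' := fun m' c' h =>
    Nat.find_min' hex ⟨c', h⟩
  have key := min_cycle_nbrs hnotri hc hmin
  have hm3 := hc.1
  refine ⟨mm, c, hc, key, ?_, ?_⟩
  · intro y hy
    obtain ⟨i, hi, rfl⟩ := mem_zsupp.mp hy
    rcases cross _ _ (hc.2.2 i hi) with ⟨h1, _⟩ | ⟨h1, _⟩
    · exact Or.inl h1
    · exact Or.inr h1
  · have hadj01 : H.Adj (c 0) (c 1) := by
      have := hc.2.2 0 (by omega)
      rwa [Nat.mod_eq_of_lt (by omega)] at this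
    have hex_b : ∃ b, b ∈ B ∧ b ∈ zsupp mm c := by
      rcases cross _ _ hadj01 with ⟨_, h1⟩ | ⟨h1, _⟩
      · exact ⟨c 1, h1, mem_zsupp.mpr ⟨1, by omega, rfl⟩⟩
      · exact ⟨c 0, h1, mem_zsupp.mpr ⟨0, by omega, rfl⟩⟩
    obtain ⟨b, hbB, hbsupp⟩ := hex_b
    have h4 := hdB b hbB
    have hsub : (A.filter (H.Adj b)) ∩ zsupp mm c ⊆ (zsupp mm c).filter (H.Adj b) := by
      intro y hy
      rw [Finset.mem_inter] at hy
      exact Finset.mem_filter.mpr ⟨hy.2, (Finset.mem_filter.mp hy.1).2⟩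
    have hcard2 : ((A.filter (H.Adj b)) ∩ zsupp mm c).card ≤ 2 :=
      le_trans (Finset.card_le_card hsub) (key b)
    have hsplit := Finset.card_inter_add_card_sdiff (A.filter (H.Adj b)) (zsupp mm c)
    have : 0 < ((A.filter (H.Adj b)) \ zsupp mm c).card := by omega
    obtain ⟨y, hy⟩ := Finset.card_pos.mp this
    rw [Finset.mem_sdiff] at hy
    exact ⟨y, Finset.mem_sdiff.mpr ⟨Finset.mem_of_mem_filter _ hy.1, hy.2⟩⟩

lemma zsupp_avoid {H : SimpleGraph V} {D : Finset V} {m : ℕ} {c : ℕ → V}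
    (h : IsZC (avoidG H D) m c) : ∀ y ∈ zsupp m c, y ∉ D := by
  intro y hy
  obtain ⟨i, hi, rfl⟩ := mem_zsupp.mp hy
  exact (h.2.2 i hi).2.1

lemma IND (t : ℕ) : ∀ (H : SimpleGraph V) [DecidableRel H.Adj] (A B : Finset V),
    Disjoint A B →
    (∀ u w, H.Adj u w → (u ∈ A ∧ w ∈ B) ∨ (u ∈ B ∧ w ∈ A)) →
    (∀ a ∈ A, 2 * t + 3 ≤ (B.filter (H.Adj a)).card) →
    (∀ b ∈ B, 2 * t + 4 ≤ (A.filter (H.Adj b)).card) →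
    A.Nonempty →
    ∃ mc : Fin (t + 1) → ℕ × (ℕ → V),
      (∀ i, IsZC H (mc i).1 (mc i).2) ∧
      (∀ i j, i ≠ j → ∀ y, y ∈ zsupp (mc i).1 (mc i).2 → y ∉ zsupp (mc j).1 (mc j).2) ∧
      (∀ u : V, (∀ i, u ∉ zsupp (mc i).1 (mc i).2) →
        ((Finset.univ.biUnion fun i => zsupp (mc i).1 (mc i).2).filter (H.Adj u)).card
          ≤ 2 * (t + 1)) ∧
      (∃ a ∈ A, ∀ i, a ∉ zsupp (mc i).1 (mc i).2) := by
  induction t with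
  | zero =>
    intro H _ A B hdisj cross hdA hdB hAne
    obtain ⟨mm, c, hc, key, hsub, hAs⟩ := stage H A B hdisj cross
      (fun a ha => by have := hdA a ha; omega) (fun b hb => by have := hdB b hb; omega) hAne
    refine ⟨fun _ => (mm, c), fun _ => hc, ?_, ?_, ?_⟩
    · intro i j hij
      exact absurd (Subsingleton.elim (α := Fin 1) i j) hij
    · intro u _
      have hU : (Finset.univ.biUnion fun _ : Fin 1 => zsupp mm c) ⊆ zsupp mm c := by
        intro y hy
        rw [Finset.mem_biUnion] at hy
        obtain ⟨_, _, hy⟩ := hy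
        exact hy
      calc ((Finset.univ.biUnion fun _ : Fin 1 => zsupp mm c).filter (H.Adj u)).card
          ≤ ((zsupp mm c).filter (H.Adj u)).card :=
            Finset.card_le_card (Finset.filter_subset_filter _ hU)
        _ ≤ 2 := key u
        _ ≤ 2 * (0 + 1) := by omega
    · obtain ⟨a, ha⟩ := hAs
      rw [Finset.mem_sdiff] at ha
      exact ⟨a, ha.1, fun _ => ha.2⟩
  | succ t ih =>
    intro H _ A B hdisj cross hdA hdB hAne
    obtain ⟨mm, c, hc, key, hABsupp, hAs⟩ := stage H A B hdisj cross
      (fun a ha => by have := hdA a ha; omega) (fun b hb => by have := hdB b hb; omega) hAne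
    set D := zsupp mm c with hD
    have hdisj' : Disjoint (A \ D) (B \ D) := by
      apply Finset.disjoint_left.mpr
      intro x hx hx'
      rw [Finset.mem_sdiff] at hx hx'
      exact Finset.disjoint_left.mp hdisj hx.1 hx'.1
    have cross' : ∀ u w, (avoidG H D).Adj u w →
        (u ∈ A \ D ∧ w ∈ B \ D) ∨ (u ∈ B \ D ∧ w ∈ A \ D) := by
      intro u w huw
      obtain ⟨huw0, hu, hw⟩ := huw
      rcases cross _ _ huw0 with ⟨h1, h2⟩ | ⟨h1, h2⟩
      · exact Or.inl ⟨Finset.mem_sdiff.mpr ⟨h1, hu⟩, Finset.mem_sdiff.mpr ⟨h2, hw⟩⟩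
      · exact Or.inr ⟨Finset.mem_sdiff.mpr ⟨h1, hu⟩, Finset.mem_sdiff.mpr ⟨h2, hw⟩⟩
    have hdegtrans : ∀ (X : Finset V) (z : V) (k : ℕ), z ∉ D →
        k ≤ (X.filter (H.Adj z)).card →
        k - 2 ≤ ((X \ D).filter ((avoidG H D).Adj z)).card := by
      intro X z k hz hk
      have hsub2 : (X.filter (H.Adj z)) \ D ⊆ (X \ D).filter ((avoidG H D).Adj z) := by
        intro y hy
        rw [Finset.mem_sdiff, Finset.mem_filter] at hy
        obtain ⟨⟨hyX, hyadj⟩, hyD⟩ := hy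
        exact Finset.mem_filter.mpr ⟨Finset.mem_sdiff.mpr ⟨hyX, hyD⟩, hyadj, hz, hyD⟩
      have hint : (X.filter (H.Adj z)) ∩ D ⊆ D.filter (H.Adj z) := by
        intro y hy
        rw [Finset.mem_inter, Finset.mem_filter] at hy
        exact Finset.mem_filter.mpr ⟨hy.2, hy.1.2⟩
      have h2 : ((X.filter (H.Adj z)) ∩ D).card ≤ 2 :=
        le_trans (Finset.card_le_card hint) (key z)
      have hsplit := Finset.card_inter_add_card_sdiff (X.filter (H.Adj z)) D
      have := Finset.card_le_card hsub2
      omega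
    have hdA' : ∀ a ∈ A \ D, 2 * t + 3 ≤ ((B \ D).filter ((avoidG H D).Adj a)).card := by
      intro a ha
      rw [Finset.mem_sdiff] at ha
      have := hdegtrans B a (2 * (t + 1) + 3) ha.2 (hdA a ha.1)
      omega
    have hdB' : ∀ b ∈ B \ D, 2 * t + 4 ≤ ((A \ D).filter ((avoidG H D).Adj b)).card := by
      intro b hb
      rw [Finset.mem_sdiff] at hb
      have := hdegtrans A b (2 * (t + 1) + 4) hb.2 (hdB b hb.1)
      omega
    obtain ⟨mc', hcyc', hpair', hdam', a'', ha''A, ha''sup⟩ :=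
      ih (avoidG H D) (A \ D) (B \ D) hdisj' cross' hdA' hdB' hAs
    have hdisj0 : ∀ j : Fin (t + 1), ∀ y, y ∈ zsupp (mc' j).1 (mc' j).2 → y ∉ D :=
      fun j => zsupp_avoid (hcyc' j)
    obtain ⟨mcF, hmc0, hmcs⟩ : ∃ mcF : Fin (t + 2) → ℕ × (ℕ → V),
        mcF 0 = (mm, c) ∧ ∀ j : Fin (t + 1), mcF j.succ = mc' j :=
      ⟨Fin.cases (mm, c) mc', by simp, fun j => by simp⟩
    refine ⟨mcF, ?_, ?_, ?_, ?_⟩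
    · intro i
      rcases Fin.eq_zero_or_eq_succ i with rfl | ⟨j, rfl⟩
      · rw [hmc0]
        exact hc
      · rw [hmcs j]
        exact IsZC.mono (H := avoidG H D) (H' := H) (fun u w h => (avoidG_adj.mp h).1) (hcyc' j)
    · intro i j hij y hyi
      rcases Fin.eq_zero_or_eq_succ i with rfl | ⟨i', rfl⟩ <;>
        rcases Fin.eq_zero_or_eq_succ j with rfl | ⟨j', rfl⟩
      · exact absurd rfl hij
      · rw [hmc0] at hyi
        rw [hmcs j']
        intro hyj
        exact hdisj0 j' y hyj hyi
      · rw [hmcs i'] at hyi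
        rw [hmc0]
        exact hdisj0 i' y hyi
      · rw [hmcs i'] at hyi
        rw [hmcs j']
        have hij' : i' ≠ j' := fun h => hij (by rw [h])
        exact hpair' i' j' hij' y hyi
    · intro u hu
      have hu0 : u ∉ D := by
        have h := hu 0
        rwa [hmc0] at h
      have huj : ∀ j : Fin (t + 1), u ∉ zsupp (mc' j).1 (mc' j).2 := fun j => by
        have h := hu j.succ
        rwa [hmcs j] at h
      have hUsub : (Finset.univ.biUnion fun i => zsupp (mcF i).1 (mcF i).2) ⊆
          D ∪ Finset.univ.biUnion fun j => zsupp (mc' j).1 (mc' j).2 := by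
        intro y hy
        rw [Finset.mem_biUnion] at hy
        obtain ⟨i, -, hy⟩ := hy
        rcases Fin.eq_zero_or_eq_succ i with rfl | ⟨j, rfl⟩
        · rw [hmc0] at hy
          exact Finset.mem_union_left _ hy
        · rw [hmcs j] at hy
          exact Finset.mem_union_right _ (Finset.mem_biUnion.mpr ⟨j, Finset.mem_univ _, hy⟩)
      have h1 : ((Finset.univ.biUnion fun i => zsupp (mcF i).1 (mcF i).2).filter
            (H.Adj u)).card ≤
          ((D.filter (H.Adj u)) ∪ ((Finset.univ.biUnion fun j =>
            zsupp (mc' j).1 (mc' j).2).filter (H.Adj u))).card := by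
        rw [← Finset.filter_union]
        exact Finset.card_le_card (Finset.filter_subset_filter _ hUsub)
      have h2 := Finset.card_union_le (D.filter (H.Adj u))
        ((Finset.univ.biUnion fun j => zsupp (mc' j).1 (mc' j).2).filter (H.Adj u))
      have h3 : (Finset.univ.biUnion fun j => zsupp (mc' j).1 (mc' j).2).filter (H.Adj u)
          = (Finset.univ.biUnion fun j => zsupp (mc' j).1 (mc' j).2).filter
            ((avoidG H D).Adj u) := by
        apply Finset.filter_congr
        intro y hyU'
        rw [Finset.mem_biUnion] at hyU'
        obtain ⟨j, -, hyj⟩ := hyU'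
        have hyD : y ∉ D := hdisj0 j y hyj
        constructor
        · intro h
          exact ⟨h, hu0, hyD⟩
        · intro h
          exact h.1
      have h4 := hdam' u huj
      have h5 := key u
      rw [h3] at h1 h2
      exact le_trans h1 (le_trans h2 (by omega))
    · refine ⟨a'', (Finset.mem_sdiff.mp ha''A).1, ?_⟩
      intro i
      rcases Fin.eq_zero_or_eq_succ i with rfl | ⟨j, rfl⟩
      · rw [hmc0]
        exact (Finset.mem_sdiff.mp ha''A).2
      · rw [hmcs j]
        exact ha''sup j

lemma cleaning (G : SimpleGraph V) [DecidableRel G.Adj] (p q : ℕ) :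
    ∀ (N : ℕ) (A B : Finset V), A.card + B.card ≤ N →
    p * A.card + q * B.card < ∑ a ∈ A, (B.filter (G.Adj a)).card →
    ∃ A' B', A' ⊆ A ∧ B' ⊆ B ∧ A'.Nonempty ∧
      (∀ a ∈ A', p + 1 ≤ (B'.filter (G.Adj a)).card) ∧
      (∀ b ∈ B', q + 1 ≤ (A'.filter (fun a => G.Adj a b)).card) := by
  intro N
  induction N with
  | zero =>
    intro A B hN he
    have hA : A = ∅ := Finset.card_eq_zero.mp (by omega)
    subst hA
    simp at he
  | succ N ih =>
    intro A B hN he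
    by_cases hA : ∃ a ∈ A, (B.filter (G.Adj a)).card ≤ p
    · obtain ⟨a, haA, hap⟩ := hA
      have hsum : ∑ x ∈ A.erase a, (B.filter (G.Adj x)).card + (B.filter (G.Adj a)).card
          = ∑ x ∈ A, (B.filter (G.Adj x)).card := Finset.sum_erase_add A _ haA
      have hcard : (A.erase a).card = A.card - 1 := Finset.card_erase_of_mem haA
      have hcard1 : 1 ≤ A.card := Finset.card_pos.mpr ⟨a, haA⟩
      have hAc : A.card = (A.erase a).card + 1 := by omega
      rw [hAc, Nat.mul_add, Nat.mul_one] at he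
      obtain ⟨A', B', h1, h2, h3, h4, h5⟩ := ih (A.erase a) B (by omega) (by omega)
      exact ⟨A', B', le_trans h1 (Finset.erase_subset _ _), h2, h3, h4, h5⟩
    · push_neg at hA
      by_cases hB : ∃ b ∈ B, (A.filter (fun x => G.Adj x b)).card ≤ q
      · obtain ⟨b, hbB, hbq⟩ := hB
        have hper : ∀ a ∈ A, (B.filter (G.Adj a)).card ≤
            ((B.erase b).filter (G.Adj a)).card + (if G.Adj a b then 1 else 0) := by
          intro a _
          by_cases hab : G.Adj a b
          · rw [if_pos hab]
            have hsub : B.filter (G.Adj a) ⊆ insert b ((B.erase b).filter (G.Adj a)) := by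
              intro y hy
              rw [Finset.mem_filter] at hy
              by_cases hyb : y = b
              · exact Finset.mem_insert.mpr (Or.inl hyb)
              · exact Finset.mem_insert.mpr (Or.inr (Finset.mem_filter.mpr
                  ⟨Finset.mem_erase.mpr ⟨hyb, hy.1⟩, hy.2⟩))
            calc (B.filter (G.Adj a)).card ≤ _ := Finset.card_le_card hsub
              _ ≤ ((B.erase b).filter (G.Adj a)).card + 1 := Finset.card_insert_le _ _
          · rw [if_neg hab]
            have hsub : B.filter (G.Adj a) ⊆ (B.erase b).filter (G.Adj a) := by
              intro y hy
              rw [Finset.mem_filter] at hy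
              refine Finset.mem_filter.mpr ⟨Finset.mem_erase.mpr ⟨?_, hy.1⟩, hy.2⟩
              rintro rfl
              exact hab hy.2
            have := Finset.card_le_card hsub
            omega
        have hsum : ∑ a ∈ A, (B.filter (G.Adj a)).card ≤
            (∑ a ∈ A, ((B.erase b).filter (G.Adj a)).card) +
              (A.filter (fun x => G.Adj x b)).card := by
          have h1 : ∑ a ∈ A, (B.filter (G.Adj a)).card ≤
              ∑ a ∈ A, (((B.erase b).filter (G.Adj a)).card + (if G.Adj a b then 1 else 0)) :=
            Finset.sum_le_sum hper
          rw [Finset.sum_add_distrib] at h1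
          have h2 : ∑ a ∈ A, (if G.Adj a b then 1 else 0) =
              (A.filter (fun x => G.Adj x b)).card := by
            rw [Finset.card_filter]
          omega
        have hcard : (B.erase b).card = B.card - 1 := Finset.card_erase_of_mem hbB
        have hcard1 : 1 ≤ B.card := Finset.card_pos.mpr ⟨b, hbB⟩
        have hBc : B.card = (B.erase b).card + 1 := by omega
        rw [hBc, Nat.mul_add, Nat.mul_one] at he
        obtain ⟨A', B', h1, h2, h3, h4, h5⟩ := ih A (B.erase b) (by omega) (by omega)
        exact ⟨A', B', h1, le_trans h2 (Finset.erase_subset _ _), h3, h4, h5⟩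
      · push_neg at hB
        have hAne : A.Nonempty := by
          rcases Finset.eq_empty_or_nonempty A with rfl | h
          · simp at he
          · exact h
        exact ⟨A, B, le_refl _, le_refl _, hAne,
          fun a ha => hA a ha, fun b hb => hB b hb⟩


def bipG (G : SimpleGraph V) (A B : Finset V) : SimpleGraph V where
  Adj u w := G.Adj u w ∧ ((u ∈ A ∧ w ∈ B) ∨ (u ∈ B ∧ w ∈ A))
  symm := by
    constructor
    rintro u w ⟨h, ⟨h1, h2⟩ | ⟨h1, h2⟩⟩
    · exact ⟨h.symm, Or.inr ⟨h2, h1⟩⟩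
    · exact ⟨h.symm, Or.inl ⟨h2, h1⟩⟩
  loopless := ⟨fun u h => G.loopless.irrefl u h.1⟩

instance (G : SimpleGraph V) [DecidableRel G.Adj] (A B : Finset V) :
    DecidableRel (bipG G A B).Adj :=
  fun u w => inferInstanceAs (Decidable (G.Adj u w ∧ ((u ∈ A ∧ w ∈ B) ∨ (u ∈ B ∧ w ∈ A))))

lemma bipG_adj {G : SimpleGraph V} {A B : Finset V} {u w : V} :
    (bipG G A B).Adj u w ↔ G.Adj u w ∧ ((u ∈ A ∧ w ∈ B) ∨ (u ∈ B ∧ w ∈ A)) := Iff.rfl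

lemma master (G : SimpleGraph V) [DecidableRel G.Adj] (t : ℕ) (v : V) (A B : Finset V)
    (hAB : Disjoint A B) (hvA : v ∉ A) (hvB : v ∉ B)
    (hA : ∀ a ∈ A, G.Adj v a)
    (he : (2 * t + 2) * A.card + (2 * t + 3) * B.card
        < ∑ a ∈ A, (B.filter (G.Adj a)).card) :
    HasNDisjointCycles G (t + 2) := by
  classical
  obtain ⟨A', B', hA's, hB's, hA'ne, hdA0, hdB0⟩ :=
    cleaning G (2 * t + 2) (2 * t + 3) (A.card + B.card) A B le_rfl he
  have hAB' : Disjoint A' B' := by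
    apply Finset.disjoint_left.mpr
    intro x hx hx'
    exact Finset.disjoint_left.mp hAB (hA's hx) (hB's hx')
  set Hb := bipG G A' B' with hHb
  have cross : ∀ u w, Hb.Adj u w → (u ∈ A' ∧ w ∈ B') ∨ (u ∈ B' ∧ w ∈ A') := fun u w h => h.2
  have hdA : ∀ a ∈ A', 2 * t + 3 ≤ (B'.filter (Hb.Adj a)).card := by
    intro a ha
    have heq : B'.filter (Hb.Adj a) = B'.filter (G.Adj a) := by
      apply Finset.filter_congr
      intro y hy
      constructor
      · exact fun h => h.1
      · exact fun h => ⟨h, Or.inl ⟨ha, hy⟩⟩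
    rw [heq]
    have := hdA0 a ha
    omega
  have hdB : ∀ b ∈ B', 2 * t + 4 ≤ (A'.filter (Hb.Adj b)).card := by
    intro b hb
    have heq : A'.filter (Hb.Adj b) = A'.filter (fun a => G.Adj a b) := by
      apply Finset.filter_congr
      intro y hy
      constructor
      · exact fun h => h.1.symm
      · exact fun h => ⟨h.symm, Or.inr ⟨hb, hy⟩⟩
    rw [heq]
    have := hdB0 b hb
    omega
  obtain ⟨mc', hcyc', hpair', hdam', a₁, ha₁A, ha₁sup⟩ :=
    IND t Hb A' B' hAB' cross hdA hdB hA'ne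
  set U := Finset.univ.biUnion fun j : Fin (t + 1) => zsupp (mc' j).1 (mc' j).2 with hU
  have hsuppAB : ∀ j : Fin (t + 1), ∀ y, y ∈ zsupp (mc' j).1 (mc' j).2 →
      y ∈ A' ∨ y ∈ B' := by
    intro j y hy
    obtain ⟨i, hi, rfl⟩ := mem_zsupp.mp hy
    rcases cross _ _ ((hcyc' j).2.2 i hi) with ⟨h1, _⟩ | ⟨h1, _⟩
    · exact Or.inl h1
    · exact Or.inr h1
  have hUAB : ∀ y ∈ U, y ∈ A' ∨ y ∈ B' := by
    intro y hy
    rw [hU, Finset.mem_biUnion] at hy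
    obtain ⟨j, -, hy⟩ := hy
    exact hsuppAB j y hy
  -- find the special 4-cycle through v
  have hdam₁ := hdam' a₁ ha₁sup
  have hb₁ : ∃ b₁, b₁ ∈ B' ∧ G.Adj a₁ b₁ ∧ b₁ ∉ U := by
    have hint : (B'.filter (G.Adj a₁)) ∩ U ⊆ U.filter (Hb.Adj a₁) := by
      intro y hy
      rw [Finset.mem_inter, Finset.mem_filter] at hy
      exact Finset.mem_filter.mpr ⟨hy.2, hy.1.2, Or.inl ⟨ha₁A, hy.1.1⟩⟩
    have h2 : ((B'.filter (G.Adj a₁)) ∩ U).card ≤ 2 * (t + 1) :=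
      le_trans (Finset.card_le_card hint) hdam₁
    have hsplit := Finset.card_inter_add_card_sdiff (B'.filter (G.Adj a₁)) U
    have hge : 2 * t + 3 ≤ (B'.filter (G.Adj a₁)).card := by
      have heq : B'.filter (Hb.Adj a₁) = B'.filter (G.Adj a₁) := by
        apply Finset.filter_congr
        intro y hy
        exact ⟨fun h => h.1, fun h => ⟨h, Or.inl ⟨ha₁A, hy⟩⟩⟩
      have := hdA a₁ ha₁A
      rw [heq] at this
      exact this
    have : 0 < ((B'.filter (G.Adj a₁)) \ U).card := by omega
    obtain ⟨b₁, hb₁⟩ := Finset.card_pos.mp this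
    rw [Finset.mem_sdiff, Finset.mem_filter] at hb₁
    exact ⟨b₁, hb₁.1.1, hb₁.1.2, hb₁.2⟩
  obtain ⟨b₁, hb₁B, hab₁, hb₁U⟩ := hb₁
  have hb₁sup : ∀ j : Fin (t + 1), b₁ ∉ zsupp (mc' j).1 (mc' j).2 := by
    intro j hj
    exact hb₁U (Finset.mem_biUnion.mpr ⟨j, Finset.mem_univ _, hj⟩)
  have hdamb := hdam' b₁ hb₁sup
  have ha₂₃ : ∃ a₂ a₃, a₂ ∈ A' ∧ a₃ ∈ A' ∧ a₂ ≠ a₃ ∧ G.Adj a₂ b₁ ∧ G.Adj a₃ b₁ ∧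
      a₂ ∉ U ∧ a₃ ∉ U := by
    have hint : (A'.filter (fun a => G.Adj a b₁)) ∩ U ⊆ U.filter (Hb.Adj b₁) := by
      intro y hy
      rw [Finset.mem_inter, Finset.mem_filter] at hy
      exact Finset.mem_filter.mpr ⟨hy.2, hy.1.2.symm, Or.inr ⟨hb₁B, hy.1.1⟩⟩
    have h2 : ((A'.filter (fun a => G.Adj a b₁)) ∩ U).card ≤ 2 * (t + 1) :=
      le_trans (Finset.card_le_card hint) hdamb
    have hsplit := Finset.card_inter_add_card_sdiff (A'.filter (fun a => G.Adj a b₁)) U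
    have hge : 2 * t + 4 ≤ (A'.filter (fun a => G.Adj a b₁)).card := by
      have heq : A'.filter (Hb.Adj b₁) = A'.filter (fun a => G.Adj a b₁) := by
        apply Finset.filter_congr
        intro y hy
        exact ⟨fun h => h.1.symm, fun h => ⟨h.symm, Or.inr ⟨hb₁B, hy⟩⟩⟩
      have := hdB b₁ hb₁B
      rw [heq] at this
      exact this
    have hcard2 : 1 < ((A'.filter (fun a => G.Adj a b₁)) \ U).card := by omega
    obtain ⟨a₂, ha₂, a₃, ha₃, hne⟩ := Finset.one_lt_card.mp hcard2
    rw [Finset.mem_sdiff, Finset.mem_filter] at ha₂ ha₃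
    exact ⟨a₂, a₃, ha₂.1.1, ha₃.1.1, hne, ha₂.1.2, ha₃.1.2, ha₂.2, ha₃.2⟩
  obtain ⟨a₂, a₃, ha₂A, ha₃A, ha₂₃ne, hadj₂, hadj₃, ha₂U, ha₃U⟩ := ha₂₃
  -- the 4-cycle (v, a₂, b₁, a₃)
  set c₀ : ℕ → V := fun i => if i = 0 then v else if i = 1 then a₂ else if i = 2 then b₁ else a₃
    with hc₀
  have e0 : c₀ 0 = v := rfl
  have e1 : c₀ 1 = a₂ := rfl
  have e2 : c₀ 2 = b₁ := rfl
  have e3 : c₀ 3 = a₃ := rfl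
  have hv2 : v ≠ a₂ := fun h => hvA (h ▸ hA's ha₂A)
  have hv3 : v ≠ a₃ := fun h => hvA (h ▸ hA's ha₃A)
  have hvb : v ≠ b₁ := fun h => hvB (h ▸ hB's hb₁B)
  have h2b : a₂ ≠ b₁ := fun h => Finset.disjoint_left.mp hAB' (h ▸ ha₂A) (h ▸ hb₁B)
  have h3b : a₃ ≠ b₁ := fun h => Finset.disjoint_left.mp hAB' (h ▸ ha₃A) (h ▸ hb₁B)
  have hzc₀ : IsZC G 4 c₀ := by
    refine ⟨by omega, ?_, ?_⟩
    · intro i hi j hj hij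
      interval_cases i <;> interval_cases j <;> simp_all
    · intro i hi
      interval_cases i
      · rw [show (0 + 1) % 4 = 1 from rfl, e0, e1]
        exact hA a₂ (hA's ha₂A)
      · rw [show (1 + 1) % 4 = 2 from rfl, e1, e2]
        exact hadj₂
      · rw [show (2 + 1) % 4 = 3 from rfl, e2, e3]
        exact hadj₃.symm
      · rw [show (3 + 1) % 4 = 0 from rfl, e3, e0]
        exact (hA a₃ (hA's ha₃A)).symm
  have hsupp₀ : ∀ y, y ∈ zsupp 4 c₀ ↔ (y = v ∨ y = a₂ ∨ y = b₁ ∨ y = a₃) := by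
    intro y
    rw [mem_zsupp]
    constructor
    · rintro ⟨i, hi, rfl⟩
      interval_cases i
      · exact Or.inl rfl
      · exact Or.inr (Or.inl rfl)
      · exact Or.inr (Or.inr (Or.inl rfl))
      · exact Or.inr (Or.inr (Or.inr rfl))
    · rintro (rfl | rfl | rfl | rfl)
      · exact ⟨0, by omega, rfl⟩
      · exact ⟨1, by omega, rfl⟩
      · exact ⟨2, by omega, rfl⟩
      · exact ⟨3, by omega, rfl⟩
  have hsupp₀U : ∀ y, y ∈ zsupp 4 c₀ → y ∉ U := by
    intro y hy hyU
    rcases (hsupp₀ y).mp hy with rfl | rfl | rfl | rfl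
    · rcases hUAB _ hyU with h | h
      · exact hvA (hA's h)
      · exact hvB (hB's h)
    · exact ha₂U hyU
    · exact hb₁U hyU
    · exact ha₃U hyU
  obtain ⟨mcF, hmc0, hmcs⟩ : ∃ mcF : Fin (t + 2) → ℕ × (ℕ → V),
      mcF 0 = (4, c₀) ∧ ∀ j : Fin (t + 1), mcF j.succ = mc' j :=
    ⟨Fin.cases (4, c₀) mc', by simp, fun j => by simp⟩
  have hzcAll : ∀ i, IsZC G (mcF i).1 (mcF i).2 := by
    intro i
    rcases Fin.eq_zero_or_eq_succ i with rfl | ⟨j, rfl⟩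
    · rw [hmc0]
      exact hzc₀
    · rw [hmcs j]
      exact IsZC.mono (H := Hb) (H' := G) (fun u w h => h.1) (hcyc' j)
  have hdisjAll : ∀ i j, i ≠ j → ∀ y, y ∈ zsupp (mcF i).1 (mcF i).2 →
      y ∉ zsupp (mcF j).1 (mcF j).2 := by
    intro i j hij y hyi
    rcases Fin.eq_zero_or_eq_succ i with rfl | ⟨i', rfl⟩ <;>
      rcases Fin.eq_zero_or_eq_succ j with rfl | ⟨j', rfl⟩
    · exact absurd rfl hij
    · rw [hmc0] at hyi
      rw [hmcs j']
      intro hyj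
      exact hsupp₀U y hyi (Finset.mem_biUnion.mpr ⟨j', Finset.mem_univ _, hyj⟩)
    · rw [hmcs i'] at hyi
      rw [hmc0]
      intro hyj
      exact hsupp₀U y hyj (Finset.mem_biUnion.mpr ⟨i', Finset.mem_univ _, hyi⟩)
    · rw [hmcs i'] at hyi
      rw [hmcs j']
      exact hpair' i' j' (fun h => hij (by rw [h])) y hyi
  choose w hw1 hw2 using fun i => (hzcAll i).toWalk
  refine ⟨fun i => (mcF i).2 0, w, hw1, ?_⟩
  intro i j hij y hyi hyj
  exact hdisjAll i j hij y ((hw2 i y).mp hyi) ((hw2 j y).mp hyj)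

theorem stmt9 (k n : ℕ) (hk : 2 ≤ k) (lam : ℝ) (hlam : lam = 1 / (120 * (k : ℝ) ^ 2))
    (hn : 16 * (2 * (k : ℝ) - 1) / lam ^ 2 ≤ (n : ℝ))
    (G : SimpleGraph (Fin n)) [DecidableRel G.Adj]
    (hG : ¬ HasNDisjointCycles G k)
    (hmax : ∀ (H : SimpleGraph (Fin n)) [DecidableRel H.Adj],
      ¬ HasNDisjointCycles H k → graphSpectralRadius H ≤ graphSpectralRadius G)
    (ρ : ℝ) (hρ : ρ = graphSpectralRadius G)
    (x : Fin n → ℝ) (hunit : ∑ v, x v ^ 2 = 1) (hnonneg : ∀ v, 0 ≤ x v)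
    (heig : G.adjMatrix ℝ *ᵥ x = ρ • x)
    (ustar : Fin n) (hustar : ∀ v, x v ≤ x ustar)
    (R' : Set (Fin n)) (hR' : R' = {v | 4 * lam * x ustar < x v}) :
    ∀ v ∈ R',
      (eAB G (G.neighborSet v \ R') (R' \ {v}) : ℝ) ≤
        (2 * (k : ℝ) - 2) * G.degree v + (2 * (k : ℝ) - 1) * R'.ncard := by
  intro v hv
  by_contra hcon
  push_neg at hcon
  obtain ⟨t, rfl⟩ : ∃ t, k = t + 2 := ⟨k - 2, by omega⟩
  classical
  have hfin : R'.Finite := Set.toFinite R'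
  set Rf := hfin.toFinset with hRf
  set A₀ := G.neighborFinset v \ Rf with hA₀
  set B₀ := Rf.erase v with hB₀
  have heAB : eAB G (G.neighborSet v \ R') (R' \ {v}) =
      ∑ a ∈ A₀, (B₀.filter (G.Adj a)).card := by
    have hset : {p : Fin n × Fin n |
        p.1 ∈ G.neighborSet v \ R' ∧ p.2 ∈ R' \ {v} ∧ G.Adj p.1 p.2}
        = ↑((A₀ ×ˢ B₀).filter fun p => G.Adj p.1 p.2) := by
      ext ⟨p1, p2⟩
      simp only [Set.mem_setOf_eq, Finset.coe_filter, Finset.mem_product, Set.mem_diff,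
        SimpleGraph.mem_neighborSet, Set.mem_singleton_iff, hA₀, hB₀, Finset.mem_sdiff,
        SimpleGraph.mem_neighborFinset, hRf, Set.Finite.mem_toFinset, Finset.mem_erase]
      tauto
    show {p : Fin n × Fin n |
        p.1 ∈ G.neighborSet v \ R' ∧ p.2 ∈ R' \ {v} ∧ G.Adj p.1 p.2}.ncard = _
    rw [hset, Set.ncard_coe_finset]
    rw [Finset.card_filter, Finset.sum_product]
    apply Finset.sum_congr rfl
    intro a _
    rw [Finset.card_filter]
  have hA₀deg : A₀.card ≤ G.degree v := by
    rw [← SimpleGraph.card_neighborFinset_eq_degree]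
    exact Finset.card_le_card (Finset.sdiff_subset)
  have hB₀card : B₀.card ≤ R'.ncard := by
    have h1 : B₀.card ≤ Rf.card := Finset.card_le_card (Finset.erase_subset _ _)
    have h2 : R'.ncard = Rf.card := by
      rw [← Set.ncard_coe_finset Rf, hRf, Set.Finite.coe_toFinset]
    omega
  have hc1 : ((2 * t + 2 : ℕ) : ℝ) = 2 * ((t + 2 : ℕ) : ℝ) - 2 := by push_cast; ring
  have hc2 : ((2 * t + 3 : ℕ) : ℝ) = 2 * ((t + 2 : ℕ) : ℝ) - 1 := by push_cast; ring
  rw [← hc1, ← hc2] at hcon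
  have hN : (2 * t + 2) * G.degree v + (2 * t + 3) * R'.ncard
      < eAB G (G.neighborSet v \ R') (R' \ {v}) := by exact_mod_cast hcon
  have he : (2 * t + 2) * A₀.card + (2 * t + 3) * B₀.card
      < ∑ a ∈ A₀, (B₀.filter (G.Adj a)).card := by
    rw [← heAB]
    have h1 : (2 * t + 2) * A₀.card ≤ (2 * t + 2) * G.degree v :=
      Nat.mul_le_mul_left _ hA₀deg
    have h2 : (2 * t + 3) * B₀.card ≤ (2 * t + 3) * R'.ncard :=
      Nat.mul_le_mul_left _ hB₀card
    omega
  have hdisj : Disjoint A₀ B₀ := by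
    apply Finset.disjoint_left.mpr
    intro x hx hx'
    rw [hA₀, Finset.mem_sdiff] at hx
    exact hx.2 (Finset.mem_of_mem_erase hx')
  have hvA : v ∉ A₀ := by
    rw [hA₀, Finset.mem_sdiff]
    rintro ⟨h1, -⟩
    rw [SimpleGraph.mem_neighborFinset] at h1
    exact G.loopless.irrefl v h1
  have hvB : v ∉ B₀ := Finset.notMem_erase _ _
  have hAdj : ∀ a ∈ A₀, G.Adj v a := by
    intro a ha
    rw [hA₀, Finset.mem_sdiff, SimpleGraph.mem_neighborFinset] at ha
    exact ha.1
  exact hG (master G t v A₀ B₀ hdisj hvA hvB hAdj he)
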